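/- A support-arena play has infinite capacity if and only if there exists an index i that is remanent (tracked forever by the tracking list from step i onward) and leaks infinitely often. -/

import Mathlib

variable {Q : Type}

/-- Domain of a transfer graph. -/
def dom (G : Set (Q × Q)) : Set Q := {q | ∃ r, (q, r) ∈ G}

/-- Image of a transfer graph. -/
def im (G : Set (Q × Q)) : Set Q := {r | ∃ q, (q, r) ∈ G}

/-- A support-arena play, letters forgotten: supports together with the sequence
of transfer graphs (`G n` goes from `S n` to `S (n+1)`). -/
structure GraphPlay (Q : Type) where
  S : ℕ → Set Q
  G : ℕ → Set (Q × Q)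
  hdom : ∀ n, dom (G n) = S n
  him : ∀ n, im (G n) = S (n + 1)

/-- The composed transfer graph G[i,j]: (s,t) ∈ G[i,j] iff there is a path
s = path i, ..., path j = t with (path k, path (k+1)) ∈ G k for i ≤ k < j. -/
def Gseg (G : ℕ → Set (Q × Q)) (i j : ℕ) : Set (Q × Q) :=
  {p | ∃ path : ℕ → Q, path i = p.1 ∧ path j = p.2 ∧
    ∀ k, i ≤ k → k < j → (path k, path (k + 1)) ∈ G k}

/-- Relational composition of transfer graphs. -/
def relComp (G H : Set (Q × Q)) : Set (Q × Q) := {p | ∃ z, (p.1, z) ∈ G ∧ (z, p.2) ∈ H}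

/-- G leaks at H. -/
def Leaks (G H : Set (Q × Q)) : Prop :=
  ∃ q x y : Q, (q, y) ∈ relComp G H ∧ (x, y) ∈ H ∧ (q, x) ∉ G

/-- G separates the pair (r,t). -/
def Separates (G : Set (Q × Q)) (r t : Q) : Prop := ∃ q, (q, r) ∈ G ∧ (q, t) ∉ G

/-- (r,t) ∈ R_k : r and t have a common descendant. -/
def Rrel (G : ℕ → Set (Q × Q)) (k : ℕ) (r t : Q) : Prop :=
  ∃ j, k ≤ j ∧ ∃ y, (r, y) ∈ Gseg G k j ∧ (t, y) ∈ Gseg G k j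

/-- Index i leaks infinitely often: G[i,j] leaks at G_{j+1} for infinitely many j. -/
def LeaksInfOften (G : ℕ → Set (Q × Q)) (i : ℕ) : Prop :=
  {j | Leaks (Gseg G i j) (G j)}.Infinite

/-- An accumulator: a successor-closed sequence of subsets of the supports. -/
def IsAccumulator (S : ℕ → Set Q) (G : ℕ → Set (Q × Q)) (T : ℕ → Set Q) : Prop :=
  (∀ j, T j ⊆ S j) ∧ ∀ j s t, s ∈ T j → (s, t) ∈ G j → t ∈ T (j + 1)

/-- The entries of an accumulator. -/
def Entries (G : ℕ → Set (Q × Q)) (T : ℕ → Set Q) : Set (ℕ × Q × Q) :=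
  {e | (e.2.1, e.2.2) ∈ G e.1 ∧ e.2.1 ∉ T e.1 ∧ e.2.2 ∈ T (e.1 + 1)}

/-- A play has infinite capacity if some accumulator has infinitely many entries. -/
def InfiniteCapacity (P : GraphPlay Q) : Prop :=
  ∃ T, IsAccumulator P.S P.G T ∧ (Entries P.G T).Infinite

open Classical in
/-- The filtering stage of the tracking-list update: keep a graph iff it separates
some pair of states not separated by any graph kept earlier in the list. -/
noncomputable def filterStep (acc : List (Set (Q × Q))) :
    List (Set (Q × Q)) → List (Set (Q × Q))
  | [] => []
  | H :: rest =>
    if ∃ r t : Q, Separates H r t ∧ ∀ H' ∈ acc, ¬ Separates H' r t then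
      H :: filterStep (acc ++ [H]) rest
    else
      filterStep acc rest

/-- The tracking list after n steps of the play: every graph of the previous list is
composed with the new transfer graph, the new transfer graph is appended, and the
list is filtered. -/
noncomputable def trackList (G : ℕ → Set (Q × Q)) : ℕ → List (Set (Q × Q))
  | 0 => []
  | n + 1 => filterStep [] (((trackList G n).map (fun H => relComp H (G n))) ++ [G n])

/-- Index i is remanent: from step i onward, G[i,n] stays in the tracking list. -/
def Remanent (G : ℕ → Set (Q × Q)) (i : ℕ) : Prop :=
  ∀ n, i < n → Gseg G i n ∈ trackList G n

section GsegBasics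

variable {G : ℕ → Set (Q × Q)}

lemma gseg_refl (i : ℕ) (a : Q) : (a, a) ∈ Gseg G i i :=
  ⟨fun _ => a, rfl, rfl, fun k hk hk' => absurd (lt_of_le_of_lt hk hk') (by omega)⟩

lemma gseg_self_eq {i : ℕ} {a b : Q} (h : (a, b) ∈ Gseg G i i) : a = b := by
  obtain ⟨p, h1, h2, _⟩ := h
  simp only at h1 h2; rw [← h1, h2]

lemma gseg_single {n : ℕ} {a b : Q} : (a, b) ∈ Gseg G n (n + 1) ↔ (a, b) ∈ G n := by
  constructor
  · rintro ⟨p, h1, h2, h3⟩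
    have := h3 n le_rfl (Nat.lt_succ_self n)
    simp only at h1 h2
    rwa [h1, h2] at this
  · intro h
    refine ⟨fun k => if k ≤ n then a else b, by simp, by simp, fun k hk hk' => ?_⟩
    have hkn : k = n := Nat.le_antisymm (Nat.lt_succ_iff.mp hk') hk
    subst hkn
    simp only [le_refl, if_pos, if_neg (by omega : ¬ k + 1 ≤ k)]
    exact h

lemma gseg_step {i n : ℕ} {a b c : Q} (hin : i ≤ n)
    (h1 : (a, b) ∈ Gseg G i n) (h2 : (b, c) ∈ G n) : (a, c) ∈ Gseg G i (n + 1) := by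
  obtain ⟨p, hp1, hp2, hp3⟩ := h1
  simp only at hp1 hp2
  refine ⟨fun k => if k ≤ n then p k else c, by simp [hin, hp1], by simp, fun k hk hk' => ?_⟩
  rcases Nat.lt_succ_iff_lt_or_eq.mp hk' with h | h
  · have h1k : k + 1 ≤ n := h
    show ((if k ≤ n then p k else c), (if k + 1 ≤ n then p (k+1) else c)) ∈ G k
    rw [if_pos (le_of_lt h), if_pos h1k]
    exact hp3 k hk h
  · subst h
    show ((if k ≤ k then p k else c), (if k + 1 ≤ k then p (k+1) else c)) ∈ G k
    rw [if_pos le_rfl, if_neg (by omega : ¬ k + 1 ≤ k), hp2]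
    exact h2

lemma gseg_decomp {i m n : ℕ} {a c : Q} (him : i ≤ m) (hmn : m ≤ n)
    (h : (a, c) ∈ Gseg G i n) : ∃ b, (a, b) ∈ Gseg G i m ∧ (b, c) ∈ Gseg G m n := by
  obtain ⟨p, hp1, hp2, hp3⟩ := h
  exact ⟨p m, ⟨p, hp1, rfl, fun k hk hk' => hp3 k hk (lt_of_lt_of_le hk' hmn)⟩,
    ⟨p, rfl, hp2, fun k hk hk' => hp3 k (le_trans him hk) hk'⟩⟩

lemma gseg_trans {i m n : ℕ} {a b c : Q} (him : i ≤ m) (hmn : m ≤ n)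
    (h1 : (a, b) ∈ Gseg G i m) (h2 : (b, c) ∈ Gseg G m n) : (a, c) ∈ Gseg G i n := by
  obtain ⟨p, hp1, hp2, hp3⟩ := h1
  obtain ⟨q, hq1, hq2, hq3⟩ := h2
  simp only at hp1 hp2 hq1 hq2
  refine ⟨fun k => if k < m then p k else q k, ?_, ?_, fun k hk hk' => ?_⟩
  · show (if i < m then p i else q i) = a
    rcases lt_or_eq_of_le him with h | h
    · rw [if_pos h]; exact hp1
    · subst h; rw [if_neg (lt_irrefl i), hq1, ← hp2, hp1]
  · show (if n < m then p n else q n) = c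
    rw [if_neg (not_lt_of_ge hmn)]; exact hq2
  · show ((if k < m then p k else q k), (if k + 1 < m then p (k+1) else q (k+1))) ∈ G k
    by_cases hkm : k + 1 < m
    · rw [if_pos (Nat.lt_of_succ_lt hkm), if_pos hkm]
      exact hp3 k hk (by omega)
    · by_cases hk1 : k < m
      · have hk1m : k + 1 = m := Nat.le_antisymm (Nat.succ_le_of_lt hk1) (not_lt.mp hkm)
        rw [if_pos hk1, if_neg hkm, hk1m, hq1, ← hp2, ← hk1m]
        exact hp3 k hk (by omega)
      · rw [if_neg hk1, if_neg hkm]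
        exact hq3 k (not_lt.mp hk1) hk'

lemma gseg_comp_single {i n : ℕ} (hin : i ≤ n) :
    Gseg G i (n + 1) = relComp (Gseg G i n) (G n) := by
  ext ⟨a, c⟩
  constructor
  · intro h
    obtain ⟨b, hb1, hb2⟩ := gseg_decomp hin (Nat.le_succ n) h
    exact ⟨b, hb1, gseg_single.mp hb2⟩
  · rintro ⟨b, hb1, hb2⟩
    exact gseg_step hin hb1 hb2

end GsegBasics
section Supports

variable {P : GraphPlay Q}

lemma mem_S_right {i n : ℕ} {q z : Q} (h : (q, z) ∈ Gseg P.G i n) (hin : i < n) :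
    z ∈ P.S n := by
  obtain ⟨p, hp1, hp2, hp3⟩ := h
  simp only at hp1 hp2
  have h1 : n - 1 + 1 = n := by omega
  have := hp3 (n - 1) (by omega) (by omega)
  have hz : z ∈ im (P.G (n - 1)) := by
    refine ⟨p (n - 1), ?_⟩
    rwa [← hp2, ← h1]
  rw [P.him (n - 1), h1] at hz
  exact hz

lemma mem_S_left {i n : ℕ} {q z : Q} (h : (q, z) ∈ Gseg P.G i n) (hin : i < n) :
    q ∈ P.S i := by
  obtain ⟨p, hp1, hp2, hp3⟩ := h
  simp only at hp1 hp2
  have := hp3 i le_rfl hin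
  have hq : q ∈ dom (P.G i) := ⟨p (i + 1), by rwa [← hp1]⟩
  rwa [P.hdom i] at hq

lemma forward_total {m n : ℕ} (hmn : m ≤ n) {z : Q} (hz : z ∈ P.S m) :
    ∃ w, (z, w) ∈ Gseg P.G m n ∧ w ∈ P.S n := by
  induction n, hmn using Nat.le_induction with
  | base => exact ⟨z, gseg_refl m z, hz⟩
  | succ n hn ih =>
    obtain ⟨w, hw1, hw2⟩ := ih
    have : w ∈ dom (P.G n) := by rw [P.hdom n]; exact hw2
    obtain ⟨u, hu⟩ := this
    have hu2 : u ∈ P.S (n + 1) := by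
      rw [← P.him n]; exact ⟨w, hu⟩
    exact ⟨u, gseg_step hn hw1 hu, hu2⟩

lemma backward_total {i n : ℕ} (hin : i ≤ n) : ∀ {z : Q}, z ∈ P.S n →
    ∃ q, (q, z) ∈ Gseg P.G i n ∧ q ∈ P.S i := by
  induction n, hin using Nat.le_induction with
  | base => exact fun hz => ⟨_, gseg_refl i _, hz⟩
  | succ n hn ih =>
    intro z hz
    have : z ∈ im (P.G n) := by rw [P.him n]; exact hz
    obtain ⟨x, hx⟩ := this
    have hx2 : x ∈ P.S n := by
      rw [← P.hdom n]; exact ⟨z, hx⟩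
    obtain ⟨q, hq1, hq2⟩ := ih hx2
    exact ⟨q, gseg_step hn hq1 hx, hq2⟩

lemma pred_exists {n : ℕ} {z : Q} (hz : z ∈ P.S (n + 1)) :
    ∃ x, (x, z) ∈ P.G n ∧ x ∈ P.S n := by
  have : z ∈ im (P.G n) := by rw [P.him n]; exact hz
  obtain ⟨x, hx⟩ := this
  exact ⟨x, hx, by rw [← P.hdom n]; exact ⟨z, hx⟩⟩

end Supports

section LeakLemmas

variable {P : GraphPlay Q}

/-- Leak transfer upward: if a coarser (smaller) index leaks at j, so does any finer
index between it and j. -/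
lemma leak_mono {i i' j : ℕ} (h1 : i ≤ i') (h2 : i' ≤ j)
    (h : Leaks (Gseg P.G i j) (P.G j)) : Leaks (Gseg P.G i' j) (P.G j) := by
  obtain ⟨q, x, y, ⟨z, hqz, hzy⟩, hxy, hqx⟩ := h
  obtain ⟨p, hp1, hp2⟩ := gseg_decomp h1 h2 hqz
  refine ⟨p, x, y, ⟨z, hp2, hzy⟩, hxy, fun hc => hqx ?_⟩
  exact gseg_trans h1 h2 hp1 hc

/-- When G[i,n] does not leak at G n, columns propagate exactly along edges. -/
lemma noleak_col {i n : ℕ} (hin : i ≤ n) (hnl : ¬ Leaks (Gseg P.G i n) (P.G n))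
    {x y : Q} (hxy : (x, y) ∈ P.G n) (q : Q) :
    (q, y) ∈ Gseg P.G i (n + 1) ↔ (q, x) ∈ Gseg P.G i n := by
  constructor
  · intro h
    rw [gseg_comp_single hin] at h
    by_contra hqx
    exact hnl ⟨q, x, y, h, hxy, hqx⟩
  · intro h
    exact gseg_step hin h hxy

lemma sep_mono {a i n : ℕ} (hai : a ≤ i) (hin : i ≤ n) {r t : Q}
    (h : Separates (Gseg P.G a n) r t) : Separates (Gseg P.G i n) r t := by
  obtain ⟨q, hqr, hqt⟩ := h
  obtain ⟨p, hp1, hp2⟩ := gseg_decomp hai hin hqr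
  refine ⟨p, hp2, fun hc => hqt ?_⟩
  exact gseg_trans hai hin hp1 hc

/-- Leak transfer downward under separation domination (Lemma X). -/
lemma leak_transfer_down {a i j : ℕ} (haj : a ≤ j) (hij : i ≤ j)
    (hdom : ∀ r t, Separates (Gseg P.G i j) r t → Separates (Gseg P.G a j) r t)
    (h : Leaks (Gseg P.G i j) (P.G j)) : Leaks (Gseg P.G a j) (P.G j) := by
  by_contra hnl
  obtain ⟨q, x, y, ⟨z, hqz, hzy⟩, hxy, hqx⟩ := h
  -- columns of a at the two predecessors z, x of y agree
  have hcola : ∀ q', (q', z) ∈ Gseg P.G a j ↔ (q', x) ∈ Gseg P.G a j := fun q' => by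
    rw [← noleak_col haj hnl hzy q', ← noleak_col haj hnl hxy q']
  -- hence columns of i agree as well
  have hcoli : (q, x) ∈ Gseg P.G i j := by
    by_contra hc
    have hsep : Separates (Gseg P.G i j) z x := ⟨q, hqz, hc⟩
    obtain ⟨q', hq'z, hq'x⟩ := hdom z x hsep
    exact hq'x ((hcola q').mp hq'z)
  exact hqx hcoli

/-- One-sided propagation of separation domination under no leaks on both sides. -/
lemma sep_dom_propagate {a i m : ℕ} (ham : a ≤ m) (him : i ≤ m)
    (hdom : ∀ r t, Separates (Gseg P.G i m) r t → Separates (Gseg P.G a m) r t)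
    (hnla : ¬ Leaks (Gseg P.G a m) (P.G m)) (hnli : ¬ Leaks (Gseg P.G i m) (P.G m)) :
    ∀ r t, Separates (Gseg P.G i (m + 1)) r t → Separates (Gseg P.G a (m + 1)) r t := by
  intro y y' hsep
  obtain ⟨q, hqy, hqy'⟩ := hsep
  have hyS : y ∈ P.S (m + 1) := mem_S_right hqy (by omega)
  obtain ⟨x, hxy, hxS⟩ := pred_exists hyS
  by_cases hy'S : y' ∈ P.S (m + 1)
  · obtain ⟨x', hx'y', hx'S⟩ := pred_exists hy'S
    have hqx : (q, x) ∈ Gseg P.G i m := (noleak_col him hnli hxy q).mp hqy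
    have hqx' : (q, x') ∉ Gseg P.G i m := fun hc =>
      hqy' ((noleak_col him hnli hx'y' q).mpr hc)
    obtain ⟨q', hq'x, hq'x'⟩ := hdom x x' ⟨q, hqx, hqx'⟩
    refine ⟨q', gseg_step ham hq'x hxy, fun hc => hq'x' ?_⟩
    exact (noleak_col ham hnla hx'y' q').mp hc
  · obtain ⟨q', hq', _⟩ := backward_total (le_trans ham (Nat.le_succ m)) hyS
    refine ⟨q', hq', fun hc => hy'S (mem_S_right hc (by omega))⟩

/-- As long as some leak of index I lies in the future, the I-columns distinguish
two support states (the play is not yet column-trivial). -/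
lemma support_sep_pair {I m : ℕ} (hIm : I ≤ m)
    (hfut : ∃ j, m ≤ j ∧ Leaks (Gseg P.G I j) (P.G j)) :
    ∃ x x', x ∈ P.S m ∧ x' ∈ P.S m ∧ Separates (Gseg P.G I m) x x' := by
  by_contra hno
  push_neg at hno
  obtain ⟨j, hmj, hleak⟩ := hfut
  -- all I-columns on the support are equal at time m, and this propagates
  have key : ∀ j', m ≤ j' → ∀ x x' : Q, x ∈ P.S j' → x' ∈ P.S j' →
      ∀ q, (q, x) ∈ Gseg P.G I j' → (q, x') ∈ Gseg P.G I j' := by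
    intro j' hj'
    induction j', hj' using Nat.le_induction with
    | base =>
      intro x x' hx hx' q hq
      by_contra hc
      exact (hno x x' hx hx') ⟨q, hq, hc⟩
    | succ n hn ih =>
      intro x x' hx hx' q hq
      have hIn : I ≤ n := le_trans hIm hn
      obtain ⟨p', hp'x', hp'S⟩ := pred_exists hx'
      rw [gseg_comp_single hIn] at hq
      obtain ⟨z, hqz, hzx⟩ := hq
      have hzS : z ∈ P.S n := by rw [← P.hdom n]; exact ⟨x, hzx⟩
      have := ih z p' hzS hp'S q hqz
      exact gseg_step hIn this hp'x'
  -- but then index I cannot leak at j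
  obtain ⟨q, x, y, ⟨z, hqz, hzy⟩, hxy, hqx⟩ := hleak
  have hzS : z ∈ P.S j := by rw [← P.hdom j]; exact ⟨y, hzy⟩
  have hxS : x ∈ P.S j := by rw [← P.hdom j]; exact ⟨y, hxy⟩
  exact hqx (key j hmj z x hzS hxS q hqz)

end LeakLemmas
section PartA

variable {P : GraphPlay Q}

/-- Flow of a set from time β. -/
def flowT (P : GraphPlay Q) (T : ℕ → Set Q) (β n : ℕ) : Set Q :=
  {z | ∃ w ∈ T β, (w, z) ∈ Gseg P.G β n}

lemma acc_gseg {T : ℕ → Set Q} (hT : IsAccumulator P.S P.G T) {m n : ℕ} (hmn : m ≤ n) :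
    ∀ {s t : Q}, s ∈ T m → (s, t) ∈ Gseg P.G m n → t ∈ T n := by
  induction n, hmn using Nat.le_induction with
  | base => intro s t hs h; rwa [← gseg_self_eq h]
  | succ n hn ih =>
    intro s t hs h
    rw [gseg_comp_single hn] at h
    obtain ⟨z, hz1, hz2⟩ := h
    exact hT.2 n z t (ih hs hz1) hz2

lemma flow_sub_T {T : ℕ → Set Q} (hT : IsAccumulator P.S P.G T) {β n : ℕ} (h : β ≤ n) :
    flowT P T β n ⊆ T n := by
  rintro z ⟨w, hw, hwz⟩
  exact acc_gseg hT h hw hwz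

lemma flow_entry_leak {T : ℕ → Set Q} {β j : ℕ} (hβj : β ≤ j) {x y : Q}
    (hxy : (x, y) ∈ P.G j) (hx : x ∉ flowT P T β j) (hy : y ∈ flowT P T β (j + 1)) :
    Leaks (Gseg P.G β j) (P.G j) := by
  obtain ⟨w, hw, hwy⟩ := hy
  rw [gseg_comp_single hβj] at hwy
  obtain ⟨z, hz1, hz2⟩ := hwy
  exact ⟨w, x, y, ⟨z, hz1, hz2⟩, hxy, fun hc => hx ⟨w, hw, hc⟩⟩

lemma leak_bound {β : ℕ} (h : ¬ LeaksInfOften P.G β) :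
    ∃ γ, β ≤ γ ∧ ∀ j, γ ≤ j → ¬ Leaks (Gseg P.G β j) (P.G j) := by
  rw [LeaksInfOften, Set.not_infinite] at h
  obtain ⟨b, hb⟩ := h.bddAbove
  refine ⟨max β (b + 1), le_max_left _ _, fun j hj hleak => ?_⟩
  have := hb (Set.mem_setOf.mpr hleak)
  omega

variable [Fintype Q]

lemma entry_times_unbounded {T : ℕ → Set Q} (h : (Entries P.G T).Infinite) (N : ℕ) :
    ∃ j, N ≤ j ∧ ∃ x u, (x, u) ∈ P.G j ∧ x ∉ T j ∧ u ∈ T (j + 1) := by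
  by_contra hno
  push_neg at hno
  apply h
  apply Set.Finite.subset ((Set.finite_Iio N).prod (Set.finite_univ (α := Q × Q)))
  rintro ⟨j, x, u⟩ ⟨h1, h2, h3⟩
  refine ⟨?_, trivial⟩
  simp only [Set.mem_Iio]
  by_contra hc
  exact (hno j (not_lt.mp hc) x u h1 h2) h3

lemma chain_claim {T : ℕ → Set Q} (hT : IsAccumulator P.S P.G T)
    (hinf : (Entries P.G T).Infinite) (hnol : ∀ i, ¬ LeaksInfOften P.G i) :
    ∀ r : ℕ, ∃ β N₀, β ≤ N₀ ∧ ∀ n, N₀ ≤ n → r ≤ (flowT P T β n).ncard := by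
  intro r
  induction r with
  | zero => exact ⟨0, 0, le_rfl, fun n _ => Nat.zero_le _⟩
  | succ r ih =>
    obtain ⟨β, N₀, hβN, hN⟩ := ih
    obtain ⟨γ, hβγ, hγ⟩ := leak_bound (hnol β)
    obtain ⟨j, hj, x, u, hxu, hxT, huT⟩ := entry_times_unbounded hinf (max γ N₀)
    have hγj : γ ≤ j := le_trans (le_max_left _ _) hj
    have hN₀j : N₀ ≤ j := le_trans (le_max_right _ _) hj
    have hβj : β ≤ j := le_trans hβγ hγj
    -- u is not in the old flow
    have hu_not : u ∉ flowT P T β (j + 1) := by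
      intro hc
      exact hγ j hγj (flow_entry_leak hβj hxu (fun hx => hxT (flow_sub_T hT hβj hx)) hc)
    -- the flow of u stays disjoint from the old flow
    have hdisj : ∀ n, j + 1 ≤ n → ∀ z, (u, z) ∈ Gseg P.G (j + 1) n →
        z ∉ flowT P T β n := by
      intro n hn
      induction n, hn using Nat.le_induction with
      | base => intro z hz; rw [← gseg_self_eq hz]; exact hu_not
      | succ n hn ih2 =>
        intro z hz hzF
        rw [gseg_comp_single hn] at hz
        obtain ⟨w, hw1, hw2⟩ := hz
        have hwF : w ∉ flowT P T β n := ih2 w hw1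
        exact hγ n (le_trans hγj (by omega)) (flow_entry_leak (le_trans hβj (by omega)) hw2 hwF hzF)
    refine ⟨j + 1, j + 1, le_rfl, fun n hn => ?_⟩
    -- the old flow is contained in the new flow
    have hsub : flowT P T β n ⊆ flowT P T (j + 1) n := by
      rintro z ⟨w, hw, hwz⟩
      obtain ⟨m, hm1, hm2⟩ := gseg_decomp (by omega : β ≤ j + 1) hn hwz
      exact ⟨m, flow_sub_T hT (by omega) ⟨w, hw, hm1⟩, hm2⟩
    -- a fresh point in the new flow
    obtain ⟨w₀, hw₀, _⟩ := forward_total hn (hT.1 (j + 1) huT)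
    have hw₀new : w₀ ∈ flowT P T (j + 1) n := ⟨u, huT, hw₀⟩
    have hw₀old : w₀ ∉ flowT P T β n := hdisj n hn w₀ hw₀
    calc r + 1 ≤ (flowT P T β n).ncard + 1 := by
          have := hN n (le_trans hN₀j (by omega)); omega
      _ = (insert w₀ (flowT P T β n)).ncard :=
          (Set.ncard_insert_of_notMem hw₀old (Set.toFinite _)).symm
      _ ≤ (flowT P T (j + 1) n).ncard := by
          apply Set.ncard_le_ncard _ (Set.toFinite _)
          rw [Set.insert_subset_iff]
          exact ⟨hw₀new, hsub⟩

/-- Part A: infinite capacity yields an index leaking infinitely often. -/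
lemma capacity_to_leaky (hcap : InfiniteCapacity P) : ∃ i, LeaksInfOften P.G i := by
  by_contra hno
  push_neg at hno
  obtain ⟨T, hT, hinf⟩ := hcap
  obtain ⟨β, N₀, _, hN⟩ := chain_claim hT hinf (fun i => hno i) (Fintype.card Q + 1)
  have h1 := hN N₀ le_rfl
  have h2 : (flowT P T β N₀).ncard ≤ Fintype.card Q := by
    have := Set.ncard_le_ncard (Set.subset_univ (flowT P T β N₀)) (Set.toFinite _)
    rwa [Set.ncard_univ, Nat.card_eq_fintype_card] at this
  omega

end PartA
section Backward

variable {P : GraphPlay Q}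

lemma gseg_lt_full {G : ℕ → Set (Q × Q)} {i j : ℕ} (h : j < i) (a b : Q) :
    (a, b) ∈ Gseg G i j := by
  refine ⟨fun k => if k = i then a else b, by simp, ?_, fun k hk hk' => absurd (lt_of_le_of_lt hk hk') (by omega)⟩
  simp only
  rw [if_neg (by omega)]

lemma leak_time_ge {i j : ℕ} (h : Leaks (Gseg P.G i j) (P.G j)) : i ≤ j := by
  by_contra hc
  obtain ⟨q, x, y, _, _, hqx⟩ := h
  exact hqx (gseg_lt_full (not_le.mp hc) q x)

lemma leaky_to_capacity [Fintype Q] {i : ℕ} (h : LeaksInfOften P.G i) :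
    InfiniteCapacity P := by
  classical
  set J := {j | Leaks (Gseg P.G i j) (P.G j)} with hJdef
  have hJ : J.Infinite := h
  -- Q is nonempty
  obtain ⟨j₀, hj₀⟩ := hJ.nonempty
  obtain ⟨q₀, _, _, _⟩ := hj₀
  have hQ : Nonempty Q := ⟨q₀⟩
  -- choose witnesses
  have htot : ∀ j, ∃ q x y, j ∈ J →
      ((q, y) ∈ relComp (Gseg P.G i j) (P.G j) ∧ (x, y) ∈ P.G j ∧ (q, x) ∉ Gseg P.G i j) := by
    intro j
    by_cases hj : j ∈ J
    · obtain ⟨q, x, y, h1, h2, h3⟩ := hj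
      exact ⟨q, x, y, fun _ => ⟨h1, h2, h3⟩⟩
    · exact ⟨q₀, q₀, q₀, fun hc => absurd hc hj⟩
  choose qf xf yf hf using htot
  -- pigeonhole: a fixed q with infinitely many leaks
  have hfib : ∃ q : Q, {j ∈ J | qf j = q}.Infinite := by
    by_contra hno
    push_neg at hno
    apply hJ
    apply Set.Finite.subset (Set.finite_iUnion (fun q : Q => hno q))
    intro j hj
    exact Set.mem_iUnion.mpr ⟨qf j, hj, rfl⟩
  obtain ⟨q, hq⟩ := hfib
  set J' := {j ∈ J | qf j = q} with hJ'def
  -- q belongs to the support at time i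
  obtain ⟨j₁, hj₁J, hj₁gt⟩ := hq.exists_gt i
  have hq_S : q ∈ P.S i := by
    obtain ⟨⟨z, hqz, _⟩, _, _⟩ := hf j₁ hj₁J.1
    rw [hj₁J.2] at hqz
    exact mem_S_left hqz hj₁gt
  -- the row accumulator of q
  set T : ℕ → Set Q := fun n => if n < i then ∅ else {z | (q, z) ∈ Gseg P.G i n} with hTdef
  have hTacc : IsAccumulator P.S P.G T := by
    constructor
    · intro n z hz
      simp only [hTdef] at hz
      by_cases hn : n < i
      · rw [if_pos hn] at hz; exact absurd hz (Set.notMem_empty z)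
      · rw [if_neg hn] at hz
        rcases lt_or_eq_of_le (not_lt.mp hn) with h' | h'
        · exact mem_S_right hz h'
        · rw [← h'] at hz ⊢
          rwa [← gseg_self_eq hz]
    · intro n s t hs hst
      simp only [hTdef] at hs ⊢
      by_cases hn : n < i
      · rw [if_pos hn] at hs; exact absurd hs (Set.notMem_empty s)
      · rw [if_neg hn] at hs
        rw [if_neg (by omega)]
        exact gseg_step (not_lt.mp hn) hs hst
  refine ⟨T, hTacc, ?_⟩
  -- entries of the row accumulator at each leak time
  have hentry : ∀ j ∈ J', (j, xf j, yf j) ∈ Entries P.G T := by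
    intro j hj
    obtain ⟨h1, h2, h3⟩ := hf j hj.1
    rw [hj.2] at h1 h3
    have hij : i ≤ j := leak_time_ge hj.1
    refine ⟨h2, ?_, ?_⟩
    · simp only [hTdef, if_neg (not_lt.mpr hij)]
      exact h3
    · simp only [hTdef, if_neg (by omega : ¬ j + 1 < i)]
      rw [gseg_comp_single hij] at *
      exact h1
  have hinj : Set.InjOn (fun j => (j, xf j, yf j)) J' := by
    intro a _ b _ hab
    exact congrArg Prod.fst hab
  exact Set.Infinite.mono (by rintro e ⟨j, hj, rfl⟩; exact hentry j hj) (hq.image hinj)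

end Backward
section ListMachinery

variable {P : GraphPlay Q}

lemma filterStep_sublist (acc : List (Set (Q × Q))) (l : List (Set (Q × Q))) :
    (filterStep acc l).Sublist l := by
  induction l generalizing acc with
  | nil => simp [filterStep]
  | cons H rest ih =>
    rw [filterStep]
    by_cases h : ∃ r t : Q, Separates H r t ∧ ∀ H' ∈ acc, ¬ Separates H' r t
    · rw [if_pos h]
      exact (ih (acc ++ [H])).cons₂ H
    · rw [if_neg h]
      exact (ih acc).cons H

lemma filterStep_complete {r t : Q} (acc l : List (Set (Q × Q)))
    (h : ∃ H ∈ l, Separates H r t) :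
    (∃ H' ∈ acc, Separates H' r t) ∨ ∃ H' ∈ filterStep acc l, Separates H' r t := by
  induction l generalizing acc with
  | nil => simp at h
  | cons H rest ih =>
    rw [filterStep]
    by_cases hc : ∃ r t : Q, Separates H r t ∧ ∀ H' ∈ acc, ¬ Separates H' r t
    · rw [if_pos hc]
      rcases h with ⟨H₀, hH₀, hsep⟩
      rcases List.mem_cons.mp hH₀ with rfl | hmem
      · exact Or.inr ⟨H₀, List.mem_cons_self, hsep⟩
      · rcases ih (acc ++ [H]) ⟨H₀, hmem, hsep⟩ with ⟨H', h1, h2⟩ | ⟨H', h1, h2⟩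
        · rcases List.mem_append.mp h1 with h1 | h1
          · exact Or.inl ⟨H', h1, h2⟩
          · simp only [List.mem_singleton] at h1; subst h1
            exact Or.inr ⟨H', List.mem_cons_self, h2⟩
        · exact Or.inr ⟨H', List.mem_cons_of_mem _ h1, h2⟩
    · rw [if_neg hc]
      push_neg at hc
      rcases h with ⟨H₀, hH₀, hsep⟩
      rcases List.mem_cons.mp hH₀ with rfl | hmem
      · obtain ⟨H', h1, h2⟩ := hc r t hsep
        exact Or.inl ⟨H', h1, h2⟩
      · exact ih acc ⟨H₀, hmem, hsep⟩

open Classical in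
/-- Index-level filtering mirroring `filterStep`. -/
noncomputable def idxFilter (P : GraphPlay Q) (n : ℕ) (acc : List ℕ) : List ℕ → List ℕ
  | [] => []
  | a :: rest =>
    if ∃ r t : Q, Separates (Gseg P.G a n) r t ∧
        ∀ a' ∈ acc, ¬ Separates (Gseg P.G a' n) r t then
      a :: idxFilter P n (acc ++ [a]) rest
    else
      idxFilter P n acc rest

/-- Index-level tracking list. -/
noncomputable def trackIdx (P : GraphPlay Q) : ℕ → List ℕ
  | 0 => []
  | n + 1 => idxFilter P (n + 1) [] (trackIdx P n ++ [n])

lemma idxFilter_sublist (n : ℕ) (acc l : List ℕ) : (idxFilter P n acc l).Sublist l := by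
  induction l generalizing acc with
  | nil => simp [idxFilter]
  | cons a rest ih =>
    rw [idxFilter]
    by_cases h : ∃ r t : Q, Separates (Gseg P.G a n) r t ∧
        ∀ a' ∈ acc, ¬ Separates (Gseg P.G a' n) r t
    · rw [if_pos h]; exact (ih (acc ++ [a])).cons₂ a
    · rw [if_neg h]; exact (ih acc).cons a

lemma idxFilter_map (n : ℕ) (acc l : List ℕ) :
    filterStep (acc.map (fun a => Gseg P.G a n)) (l.map (fun a => Gseg P.G a n)) =
      (idxFilter P n acc l).map (fun a => Gseg P.G a n) := by
  induction l generalizing acc with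
  | nil => simp [filterStep, idxFilter]
  | cons a rest ih =>
    rw [idxFilter, List.map_cons, filterStep]
    have hiff : (∃ r t : Q, Separates (Gseg P.G a n) r t ∧
        ∀ H' ∈ acc.map (fun a => Gseg P.G a n), ¬ Separates H' r t) ↔
        (∃ r t : Q, Separates (Gseg P.G a n) r t ∧
        ∀ a' ∈ acc, ¬ Separates (Gseg P.G a' n) r t) := by
      constructor
      · rintro ⟨r, t, h1, h2⟩
        exact ⟨r, t, h1, fun a' ha' => h2 _ (List.mem_map_of_mem ha')⟩
      · rintro ⟨r, t, h1, h2⟩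
        refine ⟨r, t, h1, ?_⟩
        rintro H' hH'
        obtain ⟨a', ha', rfl⟩ := List.mem_map.mp hH'
        exact h2 a' ha'
    by_cases h : ∃ r t : Q, Separates (Gseg P.G a n) r t ∧
        ∀ a' ∈ acc, ¬ Separates (Gseg P.G a' n) r t
    · rw [if_pos (hiff.mpr h), if_pos h, List.map_cons]
      congr 1
      have hmm : (acc.map (fun a => Gseg P.G a n)) ++ [Gseg P.G a n] =
          (acc ++ [a]).map (fun a => Gseg P.G a n) := by simp
      rw [hmm, ih]
    · rw [if_neg (fun hc => h (hiff.mp hc)), if_neg h]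
      exact ih acc

lemma trackIdx_lt : ∀ n, ∀ a ∈ trackIdx P n, a < n := by
  intro n
  induction n with
  | zero => intro a ha; simp [trackIdx] at ha
  | succ n ih =>
    intro a ha
    have := (idxFilter_sublist (P := P) (n + 1) [] (trackIdx P n ++ [n])).mem ha
    rcases List.mem_append.mp this with h | h
    · exact lt_trans (ih a h) (Nat.lt_succ_self n)
    · simp only [List.mem_singleton] at h; omega

lemma trackIdx_map : ∀ n, trackList P.G n = (trackIdx P n).map (fun a => Gseg P.G a n) := by
  intro n
  induction n with
  | zero => simp [trackList, trackIdx]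
  | succ n ih =>
    rw [trackList, ih, trackIdx]
    have h1 : ((trackIdx P n).map (fun a => Gseg P.G a n)).map
        (fun H => relComp H (P.G n)) = (trackIdx P n).map (fun a => Gseg P.G a (n + 1)) := by
      rw [List.map_map]
      apply List.map_congr_left
      intro a ha
      simp only [Function.comp_apply]
      exact (gseg_comp_single (le_of_lt (trackIdx_lt n a ha))).symm
    have h2 : P.G n = Gseg P.G n (n + 1) := by
      ext ⟨x, y⟩; exact gseg_single.symm
    rw [h1]
    have h3 : (trackIdx P n).map (fun a => Gseg P.G a (n + 1)) ++ [P.G n] =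
        ((trackIdx P n) ++ [n]).map (fun a => Gseg P.G a (n + 1)) := by
      rw [List.map_append, List.map_singleton, ← h2]
    rw [h3]
    have := idxFilter_map (P := P) (n + 1) [] (trackIdx P n ++ [n])
    simpa using this

lemma trackIdx_succ_mem {n : ℕ} {a : ℕ} (h : a ∈ trackIdx P (n + 1)) :
    a ∈ trackIdx P n ∨ a = n := by
  have := (idxFilter_sublist (P := P) (n + 1) [] (trackIdx P n ++ [n])).mem
    (by rw [trackIdx] at h; exact h)
  rcases List.mem_append.mp this with h' | h'
  · exact Or.inl h'
  · simp only [List.mem_singleton] at h'; exact Or.inr h'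

lemma trackIdx_sorted : ∀ n, (trackIdx P n).Pairwise (· < ·) := by
  intro n
  induction n with
  | zero => simp [trackIdx]
  | succ n ih =>
    have hsort : ((trackIdx P n) ++ [n]).Pairwise (· < ·) := by
      show ((trackIdx P n) ++ [n]).Pairwise (· < ·)
      rw [List.pairwise_append]
      refine ⟨ih, by simp, fun a ha b hb => ?_⟩
      simp only [List.mem_singleton] at hb; subst hb; exact trackIdx_lt _ a ha
    rw [trackIdx]
    exact List.Pairwise.sublist (idxFilter_sublist _ _ _) hsort

/-- If an index separates a pair not separated by anything processed before it,
it is kept by the index filter. -/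
lemma idxFilter_keeps {n : ℕ} {a : ℕ} {r t : Q} (hsep : Separates (Gseg P.G a n) r t) :
    ∀ (l₁ l₂ acc : List ℕ), (∀ a' ∈ acc ++ l₁, ¬ Separates (Gseg P.G a' n) r t) →
    a ∈ idxFilter P n acc (l₁ ++ a :: l₂) := by
  intro l₁
  induction l₁ with
  | nil =>
    intro l₂ acc hno
    simp only [List.nil_append]
    rw [idxFilter]
    rw [if_pos ⟨r, t, hsep, fun a' ha' => hno a' (by simpa using ha')⟩]
    exact List.mem_cons_self
  | cons b l₁ ih =>
    intro l₂ acc hno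
    simp only [List.cons_append]
    rw [idxFilter]
    by_cases h : ∃ r' t' : Q, Separates (Gseg P.G b n) r' t' ∧
        ∀ a' ∈ acc, ¬ Separates (Gseg P.G a' n) r' t'
    · rw [if_pos h]
      refine List.mem_cons_of_mem _ (ih l₂ (acc ++ [b]) ?_)
      intro a' ha'
      apply hno a'
      simp only [List.mem_append, List.mem_cons, List.mem_singleton] at ha' ⊢
      tauto
    · rw [if_neg h]
      refine ih l₂ acc ?_
      intro a' ha'
      apply hno a'
      simp only [List.mem_append, List.mem_cons] at ha' ⊢
      tauto

end ListMachinery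
section MainForward

variable {P : GraphPlay Q}

lemma leaky_iso_upward {I i' : ℕ} (hI : LeaksInfOften P.G I) (h : I ≤ i') :
    LeaksInfOften P.G i' := by
  apply Set.Infinite.mono (s := {j | Leaks (Gseg P.G I j) (P.G j)} \ Set.Iio i')
  · rintro j ⟨hj, hj2⟩
    simp only [Set.mem_Iio, not_lt] at hj2
    exact leak_mono h hj2 hj
  · exact hI.diff (Set.finite_Iio i')

lemma exists_remanent_leaky [Fintype Q] (hex : ∃ i, LeaksInfOften P.G i) :
    ∃ i, Remanent P.G i ∧ LeaksInfOften P.G i := by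
  classical
  set I := Nat.find hex with hIdef
  have hI : LeaksInfOften P.G I := Nat.find_spec hex
  have hmin : ∀ a, a < I → ¬ LeaksInfOften P.G a := fun a ha => Nat.find_min hex ha
  -- a uniform bound beyond which no index below I leaks
  have htot : ∀ a, ∃ γ, ∀ j, γ ≤ j → a < I → ¬ Leaks (Gseg P.G a j) (P.G j) := by
    intro a
    by_cases ha : a < I
    · obtain ⟨γ, _, hγ⟩ := leak_bound (hmin a ha)
      exact ⟨γ, fun j hj _ => hγ j hj⟩
    · exact ⟨0, fun j _ hc => absurd hc ha⟩
  choose γf hγf using htot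
  set N₃ := I + 1 + (Finset.range I).sup γf with hN₃def
  have hN₃I : I < N₃ := by omega
  have hquiet : ∀ a, a < I → ∀ j, N₃ ≤ j → ¬ Leaks (Gseg P.G a j) (P.G j) := by
    intro a ha j hj
    refine hγf a j ?_ ha
    have : γf a ≤ (Finset.range I).sup γf := Finset.le_sup (Finset.mem_range.mpr ha)
    omega
  -- (✦): strict separation domination of I over every smaller index, from N₃ on
  have hstar : ∀ a, a < I → ∀ n, N₃ ≤ n → ∃ r t : Q,
      Separates (Gseg P.G I n) r t ∧ ¬ Separates (Gseg P.G a n) r t := by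
    intro a ha n hn
    by_contra hno
    push_neg at hno
    have hdom0 : ∀ r t : Q, Separates (Gseg P.G I n) r t → Separates (Gseg P.G a n) r t :=
      hno
    have hexj : ∃ j, n ≤ j ∧ Leaks (Gseg P.G I j) (P.G j) := by
      obtain ⟨j, hj1, hj2⟩ := hI.exists_gt n
      exact ⟨j, le_of_lt hj2, hj1⟩
    
    set jm := Nat.find hexj with hjmdef
    obtain ⟨hjm1, hjm2⟩ := Nat.find_spec hexj
    have haI : a < n := lt_of_lt_of_le (lt_trans ha hN₃I) hn
    have hIn : I < n := lt_of_lt_of_le hN₃I hn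
    -- propagate the domination up to the first I-leak
    have prop : ∀ m, n ≤ m → m ≤ jm →
        ∀ r t : Q, Separates (Gseg P.G I m) r t → Separates (Gseg P.G a m) r t := by
      intro m hm
      induction m, hm using Nat.le_induction with
      | base => exact fun _ => hdom0
      | succ m hm ih =>
        intro hm1 r t hsep
        have hmjm : m ≤ jm := by omega
        have hmlt : m < jm := by omega
        have hnlI : ¬ Leaks (Gseg P.G I m) (P.G m) := by
          intro hc
          exact Nat.find_min hexj hmlt ⟨hm, hc⟩
        have hnla : ¬ Leaks (Gseg P.G a m) (P.G m) := hquiet a ha m (le_trans hn hm)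
        exact sep_dom_propagate (by omega) (by omega) (ih hmjm) hnla hnlI r t hsep
    have := leak_transfer_down (a := a) (i := I) (by omega) (by omega) (prop jm hjm1 le_rfl) hjm2
    exact hquiet a ha jm (le_trans hn hjm1) this
  -- a leak time of I beyond N₃
  obtain ⟨N₄, hN₄leak, hN₄gt⟩ := hI.exists_gt N₃
  have hN₄ : N₃ ≤ N₄ := le_of_lt hN₄gt
  have hIN₄ : I < N₄ := lt_of_lt_of_le hN₃I hN₄
  -- a pair witnessing separation by I but by no index below I, at any time n ≥ N₃
  have hpair : ∀ n, N₃ ≤ n → ∃ r t : Q, Separates (Gseg P.G I n) r t ∧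
      ∀ a, a < I → ¬ Separates (Gseg P.G a n) r t := by
    intro n hn
    rcases Nat.eq_zero_or_pos I with hI0 | hIpos
    · obtain ⟨j, hj1, hj2⟩ := hI.exists_gt n
      obtain ⟨x, x', _, _, hsep⟩ := support_sep_pair (le_of_lt (lt_of_lt_of_le hN₃I hn))
        ⟨j, le_of_lt hj2, hj1⟩
      exact ⟨x, x', hsep, fun a ha => absurd ha (by omega)⟩
    · obtain ⟨r, t, h1, h2⟩ := hstar (I - 1) (by omega) n hn
      refine ⟨r, t, h1, fun a ha hc => h2 ?_⟩
      exact sep_mono (by omega) (by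
        have := lt_of_lt_of_le hN₃I hn; omega) hc
  -- base: some tracked index at time N₄ is at least I
  have hbase : ∃ a, a ∈ trackIdx P N₄ ∧ I ≤ a := by
    obtain ⟨r, t, hsepI, hnosmall⟩ := hpair N₄ hN₄
    obtain ⟨m, hm⟩ : ∃ m, N₄ = m + 1 := ⟨N₄ - 1, by omega⟩
    have hIm : I ≤ m := by omega
    -- the pair is separated by the last candidate G m
    have hsepGm : Separates (P.G m) r t := by
      have := sep_mono hIm (by omega : m ≤ N₄) hsepI
      rw [hm] at this
      obtain ⟨q, hq1, hq2⟩ := this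
      exact ⟨q, gseg_single.mp hq1, fun hc => hq2 (gseg_single.mpr hc)⟩
    have hcomp := filterStep_complete (r := r) (t := t) []
      (((trackList P.G m).map (fun H => relComp H (P.G m))) ++ [P.G m])
      ⟨P.G m, by simp, hsepGm⟩
    rcases hcomp with ⟨H', hH', _⟩ | ⟨H', hH', hsepH'⟩
    · simp at hH'
    · have hH'2 : H' ∈ trackList P.G N₄ := by
        rw [hm, trackList]; exact hH'
      rw [trackIdx_map] at hH'2
      obtain ⟨a, ha, rfl⟩ := List.mem_map.mp hH'2
      refine ⟨a, ha, ?_⟩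
      by_contra hc
      exact hnosmall a (not_le.mp hc) hsepH'
  set istar := Nat.find hbase with histardef
  obtain ⟨histar_mem, histar_ge⟩ := Nat.find_spec hbase
  have histar_lt : istar < N₄ := trackIdx_lt N₄ istar histar_mem
  -- the two-part invariant from N₄ on
  have hkey : ∀ n, N₄ ≤ n → istar ∈ trackIdx P n ∧ ∀ b ∈ trackIdx P n, b < istar → b < I := by
    intro n hn
    induction n, hn using Nat.le_induction with
    | base =>
      refine ⟨histar_mem, fun b hb hbi => ?_⟩
      by_contra hc
      exact Nat.find_min hbase hbi ⟨hb, not_lt.mp hc⟩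
    | succ n hn ih =>
      obtain ⟨hi, hb⟩ := ih
      obtain ⟨l₁, l₂, hdec⟩ := List.append_of_mem hi
      have hl₁lt : ∀ a' ∈ l₁, a' < istar := by
        have hs := trackIdx_sorted (P := P) n
        rw [hdec] at hs
        have := (List.pairwise_append.mp hs).2.2
        exact fun a' ha' => this a' ha' istar (List.mem_cons_self)
      have hl₁I : ∀ a' ∈ l₁, a' < I := by
        intro a' ha'
        exact hb a' (by rw [hdec]; exact List.mem_append_left _ ha') (hl₁lt a' ha')
      obtain ⟨r, t, hsepI, hnosmall⟩ := hpair (n + 1) (by omega)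
      have hsepistar : Separates (Gseg P.G istar (n + 1)) r t :=
        sep_mono histar_ge (by omega) hsepI
      constructor
      · rw [trackIdx]
        have hdec2 : trackIdx P n ++ [n] = l₁ ++ istar :: (l₂ ++ [n]) := by
          rw [hdec]; simp
        rw [hdec2]
        apply idxFilter_keeps hsepistar l₁ (l₂ ++ [n]) []
        intro a' ha'
        simp only [List.nil_append] at ha'
        exact hnosmall a' (hl₁I a' ha')
      · intro b hbmem hbi
        rcases trackIdx_succ_mem hbmem with h' | h'
        · exact hb b h' hbi
        · omega
  -- downward persistence below N₄
  have hdown : ∀ d m, m + d = N₄ → istar < m → istar ∈ trackIdx P m := by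
    intro d
    induction d with
    | zero => intro m hm _; rw [show m = N₄ by omega]; exact histar_mem
    | succ d ihd =>
      intro m hm hlt
      have h1 : istar ∈ trackIdx P (m + 1) := ihd (m + 1) (by omega) (by omega)
      rcases trackIdx_succ_mem h1 with h' | h'
      · exact h'
      · omega
  refine ⟨istar, ?_, leaky_iso_upward hI histar_ge⟩
  intro n hn
  rw [trackIdx_map]
  apply List.mem_map_of_mem
  rcases le_or_gt N₄ n with h | h
  · exact (hkey n h).1
  · exact hdown (N₄ - n) n (by omega) hn

end MainForward

/-- A support-arena play has infinite capacity iff some index is remanent and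
leaks infinitely often. -/
theorem stmt12 [Fintype Q] (P : GraphPlay Q) :
    InfiniteCapacity P ↔ ∃ i, Remanent P.G i ∧ LeaksInfOften P.G i := by
  constructor
  · intro hcap
    exact exists_remanent_leaky (capacity_to_leaky hcap)
  · rintro ⟨i, _, hleak⟩
    exact leaky_to_capacity hleak
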